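/- Suppose a one-parameter family of maps T_t : C(M,ℝ) → C(M,ℝ) (t ≥ 0) satisfies the semigroup property, monotonicity (φ ≤ ψ ⟹ T_tφ ≤ T_tψ), and the translation property T_t(φ + c) ≤ T_tφ + c for constants c ≥ 0. If ū := limsup_{t→∞} T_tφ exists in C(M,ℝ), then ū ≤ T_t ū for every t ≥ 0; consequently t ↦ T_t ū is pointwise non-decreasing. -/
import Mathlib

open Filter

/-- If a monotone semigroup `T_t` on `C(M,ℝ)` satisfies `T_t(φ + c) ≤ T_tφ + c`
for constants `c ≥ 0`, and `ū = limsup_{t→∞} T_tφ` exists in `C(M,ℝ)` (with the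
limsup attained uniformly), then `ū ≤ T_t ū` for every `t ≥ 0`, and consequently
`t ↦ T_t ū` is pointwise non-decreasing. -/
theorem limsup_le_semigroup_image
    {M : Type*} [MetricSpace M] [CompactSpace M]
    (T : ℝ → C(M, ℝ) → C(M, ℝ))
    (hid : ∀ ψ : C(M, ℝ), T 0 ψ = ψ)
    (hsemi : ∀ t s : ℝ, 0 ≤ t → 0 ≤ s → ∀ ψ : C(M, ℝ), T (t + s) ψ = T t (T s ψ))
    (hmono : ∀ t : ℝ, 0 ≤ t → ∀ ψ χ : C(M, ℝ), (∀ x, ψ x ≤ χ x) →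
      ∀ x, T t ψ x ≤ T t χ x)
    (htrans : ∀ t : ℝ, 0 ≤ t → ∀ c : ℝ, 0 ≤ c → ∀ ψ : C(M, ℝ),
      ∀ x, T t (ψ + ContinuousMap.const M c) x ≤ T t ψ x + c)
    (φ : C(M, ℝ))
    (hbdd : ∃ C : ℝ, ∀ s : ℝ, 0 ≤ s → ∀ x, |T s φ x| ≤ C)
    (ubar : C(M, ℝ))
    (hlimsup : ∀ x, ubar x = limsup (fun s : ℝ => T s φ x) atTop)
    (hunif : ∀ ε : ℝ, 0 < ε → ∃ s₀ : ℝ, ∀ s : ℝ, s₀ ≤ s → ∀ x, T s φ x ≤ ubar x + ε) :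
    (∀ t : ℝ, 0 ≤ t → ∀ x, ubar x ≤ T t ubar x) ∧
    (∀ t t' : ℝ, 0 ≤ t → t ≤ t' → ∀ x, T t ubar x ≤ T t' ubar x) := by
  obtain ⟨C, hC⟩ := hbdd
  have key : ∀ t : ℝ, 0 ≤ t → ∀ x, ubar x ≤ T t ubar x := by
    intro t ht x
    refine le_of_forall_pos_le_add ?_
    intro ε hε
    obtain ⟨s₀, hs₀⟩ := hunif ε hε
    rw [hlimsup x]
    have hcob : IsCoboundedUnder (· ≤ ·) atTop (fun s : ℝ => T s φ x) := by
      apply isCoboundedUnder_le_of_eventually_le atTop (x := -C)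
      filter_upwards [eventually_ge_atTop (0 : ℝ)] with s hs
      have := hC s hs x
      linarith [abs_le.mp this]
    refine limsup_le_of_le hcob ?_
    filter_upwards [eventually_ge_atTop (t + max s₀ 0)] with r hr
    have hs : max s₀ 0 ≤ r - t := by linarith
    have hs0 : (0 : ℝ) ≤ r - t := le_trans (le_max_right _ _) hs
    have hss : s₀ ≤ r - t := le_trans (le_max_left _ _) hs
    have h1 : T r φ x = T t (T (r - t) φ) x := by
      have h := hsemi t (r - t) ht hs0 φ
      rw [show t + (r - t) = r by ring] at h
      rw [h]
    rw [h1]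
    have h2 : ∀ y, T (r - t) φ y ≤ (ubar + ContinuousMap.const M ε) y := by
      intro y
      simpa using hs₀ (r - t) hss y
    calc T t (T (r - t) φ) x ≤ T t (ubar + ContinuousMap.const M ε) x :=
          hmono t ht _ _ h2 x
      _ ≤ T t ubar x + ε := htrans t ht ε hε.le ubar x
  refine ⟨key, ?_⟩
  intro t t' ht htt' x
  have h0 : (0 : ℝ) ≤ t' - t := by linarith
  have h1 : T t' ubar = T t (T (t' - t) ubar) := by
    have h := hsemi t (t' - t) ht h0 ubar
    rw [show t + (t' - t) = t' by ring] at h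
    exact h
  rw [h1]
  exact hmono t ht _ _ (key (t' - t) h0) x
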